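/- For every t > 0, every x > 0, and every bounded continuous f : ℝ → ℝ: √(2/(π t)) ∫_0^∞ e^{−s²/(2t)} C*(s)f(x) ds = ∫_{−∞}^∞ γ⁺(t,x,y) f(y) dy, where γ⁺(t,x,y) = (1/√(2πt))·(e^{−(y−x)²/(2t)} + ((p−q)/(p+q))·e^{−(y+x)²/(2t)}) for y > 0 and γ⁺(t,x,y) = (1/√(2πt))·(2q/(p+q))·e^{−(y−x)²/(2t)} for y < 0. -/

import Mathlib

open MeasureTheory Real Filter

/-- The dual cosine family `C*(t)` (extended to all real `t` by `C*(t) = C*(-t)`). -/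
noncomputable def Cstar (p q t : ℝ) (f : ℝ → ℝ) : ℝ → ℝ := fun x =>
  if |t| ≤ |x| then (f (x + |t|) + f (x - |t|)) / 2
  else if x ≤ 0 then
    (f (x + |t|) + f (x - |t|)) / 2 + (q - p) / (2 * (p + q)) * (f (-x - |t|) - f (x + |t|))
  else
    (f (x + |t|) + f (x - |t|)) / 2 + (p - q) / (2 * (p + q)) * (f (|t| - x) - f (x - |t|))

/-- Transition density `γ⁺(t,x,y)` for a starting point `x > 0`. -/
noncomputable def gammaPlus (p q t x y : ℝ) : ℝ :=
  if 0 < y then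
    (1 / Real.sqrt (2 * Real.pi * t)) *
      (Real.exp (-(y - x)^2 / (2 * t)) + ((p - q) / (p + q)) * Real.exp (-(y + x)^2 / (2 * t)))
  else
    (1 / Real.sqrt (2 * Real.pi * t)) * (2 * q / (p + q)) * Real.exp (-(y - x)^2 / (2 * t))

/-- Transition density `γ⁻(t,x,y)` for a starting point `x < 0`. -/
noncomputable def gammaMinus (p q t x y : ℝ) : ℝ :=
  if y < 0 then
    (1 / Real.sqrt (2 * Real.pi * t)) *
      (Real.exp (-(y - x)^2 / (2 * t)) + ((q - p) / (p + q)) * Real.exp (-(y + x)^2 / (2 * t)))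
  else
    (1 / Real.sqrt (2 * Real.pi * t)) * (2 * p / (p + q)) * Real.exp (-(y - x)^2 / (2 * t))

/-- Shift lemma for set integrals on ℝ. -/
lemma setIntegral_comp_add_right' (g : ℝ → ℝ) (a : ℝ) (S : Set ℝ) :
    ∫ s in (fun y => y + a) ⁻¹' S, g (s + a) = ∫ y in S, g y := by
  have A : MeasurableEmbedding (fun y : ℝ => y + a) :=
    (Homeomorph.addRight a).isClosedEmbedding.measurableEmbedding
  have h := A.setIntegral_map (μ := volume) g S
  rw [map_add_right_eq_self (volume : Measure ℝ) a] at h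
  exact h.symm

lemma shift_Ioi (g : ℝ → ℝ) (a c : ℝ) :
    ∫ s in Set.Ioi c, g (s + a) = ∫ y in Set.Ioi (c + a), g y := by
  have := setIntegral_comp_add_right' g a (Set.Ioi (c + a))
  rwa [Set.preimage_add_const_Ioi, add_sub_cancel_right] at this

lemma shift_Iic (g : ℝ → ℝ) (a c : ℝ) :
    ∫ s in Set.Iic c, g (s + a) = ∫ y in Set.Iic (c + a), g y := by
  have := setIntegral_comp_add_right' g a (Set.Iic (c + a))
  rwa [Set.preimage_add_const_Iic, add_sub_cancel_right] at this

theorem stmt15 (p q : ℝ) (hp : 0 ≤ p) (hq : 0 ≤ q) (hpq : 0 < p + q)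
    (t x : ℝ) (ht : 0 < t) (hx : 0 < x)
    (f : ℝ → ℝ) (hf : Continuous f) (hb : ∃ M, ∀ y, |f y| ≤ M) :
    Real.sqrt (2 / (Real.pi * t)) *
        ∫ s in Set.Ioi (0:ℝ), Real.exp (-s^2 / (2 * t)) * Cstar p q s f x
      = ∫ y : ℝ, gammaPlus p q t x y * f y := by
  obtain ⟨M, hM⟩ := hb
  have hpq' : p + q ≠ 0 := ne_of_gt hpq
  set c2 : ℝ := (p - q) / (2 * (p + q)) with hc2
  set G : ℝ → ℝ → ℝ := fun a y => Real.exp (-(y - a)^2 / (2 * t)) * f y with hG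
  -- integrability of the Gaussian-weighted f
  have hInt : ∀ a : ℝ, Integrable (G a) := by
    intro a
    have h1 : Integrable (fun y : ℝ => Real.exp (-(2 * t)⁻¹ * y ^ 2)) :=
      integrable_exp_neg_mul_sq (by positivity)
    have h2 : Integrable (fun y : ℝ => Real.exp (-(2 * t)⁻¹ * (y - a) ^ 2)) :=
      h1.comp_sub_right a
    have h3 : Integrable (fun y : ℝ => Real.exp (-(y - a) ^ 2 / (2 * t))) := by
      convert h2 using 2 with y
      ring_nf
    have := h3.bdd_mul (hf.aestronglyMeasurable) (c := M) (Filter.Eventually.of_forall fun y => by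
      simpa [Real.norm_eq_abs] using hM y)
    refine this.congr ?_
    filter_upwards with y
    simp [hG, mul_comm]
  -- the four building blocks, as integrals over sets of `G`
  -- LHS integrand rewrite on Ioi 0
  have hval : ∀ s ∈ Set.Ioi (0:ℝ),
      Real.exp (-s^2 / (2 * t)) * Cstar p q s f x
        = (G x (s + x) + G x (x - s)) / 2
          + Set.indicator (Set.Ioi x) (fun s => c2 * (G (-x) (s - x) - G x (x - s))) s := by
    intro s hs
    have hs0 : (0:ℝ) < s := hs
    have habs : |s| = s := abs_of_pos hs0
    have hxabs : |x| = x := abs_of_pos hx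
    simp only [Cstar, habs, hxabs]
    by_cases hsx : s ≤ x
    · rw [if_pos hsx, Set.indicator_of_notMem (by simpa using hsx)]
      simp only [hG]
      have e1 : -(s + x - x)^2 / (2*t) = -s^2 / (2*t) := by ring_nf
      have e2 : -(x - s - x)^2 / (2*t) = -s^2 / (2*t) := by ring_nf
      rw [e1, e2, add_comm x s]
      ring
    · rw [if_neg hsx, if_neg (by linarith)]
      rw [Set.indicator_of_mem (by simpa using lt_of_not_ge hsx)]
      simp only [hG]
      have e1 : -(s + x - x)^2 / (2*t) = -s^2 / (2*t) := by ring_nf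
      have e2 : -(x - s - x)^2 / (2*t) = -s^2 / (2*t) := by ring_nf
      have e3 : -(s - x - -x)^2 / (2*t) = -s^2 / (2*t) := by ring_nf
      rw [e1, e2, e3, add_comm x s, show s - x = -(x - s) by ring, hc2]
      ring

  -- integrability pieces
  have hIx : Integrable (fun s : ℝ => G x (s + x)) := (hInt x).comp_add_right x
  have hIxm : Integrable (fun s : ℝ => G x (x - s)) := (hInt x).comp_sub_left x
  have hIc : Integrable (fun s : ℝ => G (-x) (s - x)) := (hInt (-x)).comp_sub_right x
  have hw : Integrable (fun s : ℝ => c2 * (G (-x) (s - x) - G x (x - s))) :=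
    (hIc.sub hIxm).const_mul c2
  -- compute the LHS inner integral
  have key : (∫ s in Set.Ioi (0:ℝ), Real.exp (-s^2 / (2 * t)) * Cstar p q s f x)
      = ((∫ s in Set.Ioi (0:ℝ), G x (s + x)) + (∫ s in Set.Ioi (0:ℝ), G x (x - s))) / 2
        + c2 * ((∫ s in Set.Ioi x, G (-x) (s - x)) - (∫ s in Set.Ioi x, G x (x - s))) := by
    have hu : Integrable (fun s : ℝ => (G x (s + x) + G x (x - s)) / 2) :=
      (hIx.add hIxm).div_const 2
    have hv : Integrable (fun s : ℝ =>
        Set.indicator (Set.Ioi x) (fun s => c2 * (G (-x) (s - x) - G x (x - s))) s) := by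
      simpa using hw.indicator (measurableSet_Ioi (a := x))
    rw [setIntegral_congr_fun measurableSet_Ioi hval]
    rw [integral_add hu.integrableOn hv.integrableOn]
    rw [setIntegral_indicator measurableSet_Ioi, Set.Ioi_inter_Ioi,
      sup_eq_right.mpr hx.le]
    rw [integral_div, integral_add hIx.integrableOn hIxm.integrableOn,
      integral_const_mul, integral_sub hIc.integrableOn hIxm.integrableOn]
  -- change of variables
  have s1 : (∫ s in Set.Ioi (0:ℝ), G x (s + x)) = ∫ y in Set.Ioi x, G x y := by
    simpa using shift_Ioi (G x) x 0
  have s2 : (∫ s in Set.Ioi (0:ℝ), G x (x - s)) = ∫ y in Set.Iic x, G x y := by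
    have e : (fun s : ℝ => G x (x - s)) = (fun s : ℝ => (fun u : ℝ => G x (u + x)) (-s)) := by
      funext s; congr 1; ring
    rw [e, integral_comp_neg_Ioi (0:ℝ) (fun u : ℝ => G x (u + x))]
    have h := shift_Iic (G x) x (-0)
    simpa using h
  have s3 : (∫ s in Set.Ioi x, G (-x) (s - x)) = ∫ y in Set.Ioi (0:ℝ), G (-x) y := by
    have e : (fun s : ℝ => G (-x) (s - x)) = (fun s : ℝ => G (-x) (s + (-x))) := by
      funext s; rw [sub_eq_add_neg]
    rw [e]
    have h := shift_Ioi (G (-x)) (-x) x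
    simpa using h
  have s4 : (∫ s in Set.Ioi x, G x (x - s)) = ∫ y in Set.Iic (0:ℝ), G x y := by
    have e : (fun s : ℝ => G x (x - s)) = (fun s : ℝ => (fun u : ℝ => G x (-u)) (s + (-x))) := by
      funext s; congr 1; ring
    rw [e]
    have h := shift_Ioi (fun u : ℝ => G x (-u)) (-x) x
    simp only [add_neg_cancel] at h
    rw [h]
    have h2 := integral_comp_neg_Ioi (0:ℝ) (G x)
    simpa using h2
  -- RHS decomposition
  set c0 : ℝ := 1 / Real.sqrt (2 * Real.pi * t) with hc0
  have h2c2 : 2 * c2 = (p - q) / (p + q) := by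
    rw [hc2]; field_simp
  have hγ : ∀ y : ℝ, gammaPlus p q t x y * f y
      = c0 * G x y + Set.indicator (Set.Ioi 0) (fun y => c0 * (2 * c2) * G (-x) y) y
        - Set.indicator (Set.Iic 0) (fun y => c0 * (2 * c2) * G x y) y := by
    intro y
    by_cases hy : 0 < y
    · rw [Set.indicator_of_mem (by simpa using hy),
        Set.indicator_of_notMem (by simpa using hy)]
      simp only [gammaPlus, if_pos hy, hG]
      have hyx : y - -x = y + x := by ring
      rw [hyx, ← hc0, h2c2]
      ring
    · rw [Set.indicator_of_notMem (by simpa using hy),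
        Set.indicator_of_mem (by simpa using not_lt.mp hy)]
      simp only [gammaPlus, if_neg hy, hG]
      rw [← hc0, h2c2]
      field_simp
      ring
  have hRHS : (∫ y : ℝ, gammaPlus p q t x y * f y)
      = c0 * (∫ y : ℝ, G x y) + c0 * (2 * c2) * (∫ y in Set.Ioi (0:ℝ), G (-x) y)
        - c0 * (2 * c2) * (∫ y in Set.Iic (0:ℝ), G x y) := by
    have hi1 : Integrable (fun y : ℝ => c0 * G x y) := (hInt x).const_mul c0
    have hi2 : Integrable (fun y : ℝ =>
        Set.indicator (Set.Ioi 0) (fun y => c0 * (2 * c2) * G (-x) y) y) :=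
      (((hInt (-x)).const_mul _).indicator measurableSet_Ioi)
    have hi3 : Integrable (fun y : ℝ =>
        Set.indicator (Set.Iic 0) (fun y => c0 * (2 * c2) * G x y) y) :=
      (((hInt x).const_mul _).indicator measurableSet_Iic)
    calc (∫ y : ℝ, gammaPlus p q t x y * f y)
        = ∫ y : ℝ, (c0 * G x y
            + Set.indicator (Set.Ioi 0) (fun y => c0 * (2 * c2) * G (-x) y) y
            - Set.indicator (Set.Iic 0) (fun y => c0 * (2 * c2) * G x y) y) := by
          exact integral_congr_ae (Filter.Eventually.of_forall hγ)
      _ = (∫ y : ℝ, c0 * G x y)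
            + (∫ y : ℝ, Set.indicator (Set.Ioi 0) (fun y => c0 * (2 * c2) * G (-x) y) y)
            - (∫ y : ℝ, Set.indicator (Set.Iic 0) (fun y => c0 * (2 * c2) * G x y) y) := by
          have hi12 : Integrable (fun y : ℝ => c0 * G x y
              + Set.indicator (Set.Ioi 0) (fun y => c0 * (2 * c2) * G (-x) y) y) :=
            hi1.add hi2
          rw [integral_sub hi12 hi3, integral_add hi1 hi2]
      _ = c0 * (∫ y : ℝ, G x y) + c0 * (2 * c2) * (∫ y in Set.Ioi (0:ℝ), G (-x) y)
            - c0 * (2 * c2) * (∫ y in Set.Iic (0:ℝ), G x y) := by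
          rw [integral_indicator measurableSet_Ioi, integral_indicator measurableSet_Iic,
            integral_const_mul, integral_const_mul, integral_const_mul]
  -- splitting the full-line integral
  have hsplit1 : (∫ y : ℝ, G x y)
      = (∫ y in Set.Iic x, G x y) + (∫ y in Set.Ioi x, G x y) :=
    (intervalIntegral.integral_Iic_add_Ioi (hInt x).integrableOn (hInt x).integrableOn).symm
  -- the square-root identity
  have h2πt : (0:ℝ) < 2 * Real.pi * t := by positivity
  have hsq : Real.sqrt (2 / (Real.pi * t)) = 2 * c0 := by
    have hval2 : (2 * c0) ^ 2 = 2 / (Real.pi * t) := by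
      rw [hc0, mul_pow, one_div, inv_pow, sq_sqrt h2πt.le]
      field_simp
    rw [← hval2, Real.sqrt_sq (by positivity)]
  -- put everything together
  rw [key, s1, s2, s3, s4, hRHS, hsplit1, hsq]
  ring
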